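/- For every ξ ∈ L*, the upper α-Hölder derivative of F_ψ at ξ is infinite: limsup_{η→ξ, η≠ξ} |F_ψ(ξ) − F_ψ(η)|/|ξ − η|^α = ∞. -/

import Mathlib

open Set Filter MeasureTheory Topology
open scoped ENNReal NNReal

noncomputable section

/-- A conformal iterated function system on a compact interval `X = [x₀, x₁] ⊂ ℝ`:
finitely many (`d + 1`, with `d ≥ 1`) differentiable contractions mapping `X` into its
interior, satisfying the Hölder condition (each `f a` extends to a `C^{1+ε}`
diffeomorphism of an open interval `Y = (y₀, y₁) ⊃ X` onto its image, with `f a '' Y ⊆ Y`)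
and the strong separation condition. -/
structure CIFS where
  d : ℕ
  one_le_d : 1 ≤ d
  x₀ : ℝ
  x₁ : ℝ
  x_lt : x₀ < x₁
  y₀ : ℝ
  y₁ : ℝ
  y₀_lt : y₀ < x₀
  y₁_gt : x₁ < y₁
  f : Fin (d + 1) → ℝ → ℝ
  maps_X : ∀ a, MapsTo (f a) (Icc x₀ x₁) (Ioo x₀ x₁)
  r : ℝ
  r_pos : 0 < r
  r_lt_one : r < 1
  contr : ∀ a, ∀ u ∈ Icc x₀ x₁, ∀ v ∈ Icc x₀ x₁, |f a u - f a v| ≤ r * |u - v|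
  maps_Y : ∀ a, MapsTo (f a) (Ioo y₀ y₁) (Ioo y₀ y₁)
  injOn_Y : ∀ a, InjOn (f a) (Ioo y₀ y₁)
  diff_Y : ∀ a, ∀ x ∈ Ioo y₀ y₁, DifferentiableAt ℝ (f a) x
  deriv_ne : ∀ a, ∀ x ∈ Ioo y₀ y₁, deriv (f a) x ≠ 0
  ε : NNReal
  ε_pos : 0 < ε
  ε_le_one : ε ≤ 1
  hc : NNReal
  holder : ∀ a, HolderOnWith hc ε (deriv (f a)) (Ioo y₀ y₁)
  sep : ∀ a b, a ≠ b → Disjoint (f a '' Icc x₀ x₁) (f b '' Icc x₀ x₁)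

namespace CIFS

/-- the compact interval `X`. -/
def X (S : CIFS) : Set ℝ := Icc S.x₀ S.x₁

/-- `fw ω = f_{x₁} ∘ ⋯ ∘ f_{x_n}` for the word `ω = x₁…x_n`. -/
def fw (S : CIFS) : List (Fin (S.d + 1)) → ℝ → ℝ
  | [] => id
  | a :: ω => S.f a ∘ fw S ω

/-- the limit set `L = ⋂ n ⋃_{|ω| = n} f_ω(X)`. -/
def L (S : CIFS) : Set ℝ :=
  ⋂ n : ℕ, ⋃ ω ∈ {ω : List (Fin (S.d + 1)) | ω.length = n}, S.fw ω '' S.X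

/-- the initial word `x₁…x_n` of a code `x = (x₁x₂…)` (here `x j` is the letter `x_{j+1}`). -/
def code (S : CIFS) (x : ℕ → Fin (S.d + 1)) (n : ℕ) : List (Fin (S.d + 1)) :=
  (List.range n).map x

/-- the coding map `Φ`: sends a code `x` to the unique point of `⋂ n, f_{x₁…x_n}(X)`
(this intersection is a singleton, so we may take its supremum). -/
def Φ (S : CIFS) (x : ℕ → Fin (S.d + 1)) : ℝ :=
  sSup (⋂ n : ℕ, S.fw (S.code x n) '' S.X)

/-- the cylinder set `[ω] ⊆ L` of a word `ω`. -/
def cyl (S : CIFS) (ω : List (Fin (S.d + 1))) : Set ℝ :=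
  S.Φ '' {x | S.code x ω.length = ω}

/-- the left shift on code space. -/
def shift (S : CIFS) (x : ℕ → Fin (S.d + 1)) : ℕ → Fin (S.d + 1) := fun n => x (n + 1)

/-- the Birkhoff sum `S_n g (ξ)` of `g : L → ℝ` evaluated at the point `ξ` with code `x`. -/
def birk (S : CIFS) (g : ℝ → ℝ) (n : ℕ) (x : ℕ → Fin (S.d + 1)) : ℝ :=
  ∑ k ∈ Finset.range n, g (S.Φ fun j => x (j + k))

/-- the code of a point of `L` (a choice of inverse of the coding map `Φ`). -/
def codeOf (S : CIFS) (ξ : ℝ) : ℕ → Fin (S.d + 1) := Function.invFun S.Φ ξ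

/-- the geometric potential `φ(ξ) = log |f'_{x₁}(Φ(σξ))|` for `ξ = (x₁x₂…) ∈ L`. -/
def geom (S : CIFS) : ℝ → ℝ := fun ξ =>
  Real.log |deriv (S.f (S.codeOf ξ 0)) (S.Φ (S.shift (S.codeOf ξ)))|

/-- the `n`-th approximant `(1/n) log Σ_{|ω| = n} exp (sup_{ξ ∈ [ω]} S_n g(ξ))`
of the topological pressure. -/
def presSeq (S : CIFS) (g : ℝ → ℝ) (n : ℕ) : ℝ :=
  Real.log (∑ ω : Fin n → Fin (S.d + 1),
      Real.exp (sSup (S.birk g n '' {x : ℕ → Fin (S.d + 1) | ∀ i : Fin n, x i.1 = ω i}))) / n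

/-- `P(g) = p` : the defining limit of the topological pressure exists and equals `p`. -/
def HasPressure (S : CIFS) (g : ℝ → ℝ) (p : ℝ) : Prop :=
  Tendsto (S.presSeq g) atTop (nhds p)

/-- Hölder continuity on the limit set. -/
def HolderOn (S : CIFS) (g : ℝ → ℝ) : Prop :=
  ∃ c e : NNReal, 0 < e ∧ HolderOnWith c e g S.L

/-- the standing assumptions on the potential `ψ` (for the exponent `α`):
`ψ` is Hölder continuous, `ψ < 0`, `P(ψ) = 0` and `ψ > αφ` on `L`. -/
def GoodPotential (S : CIFS) (α : ℝ) (ψ : ℝ → ℝ) : Prop :=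
  S.HolderOn ψ ∧ (∀ ξ ∈ S.L, ψ ξ < 0) ∧ S.HasPressure ψ 0 ∧
    ∀ ξ ∈ S.L, α * S.geom ξ < ψ ξ

/-- the Gibbs property of the measure `ν` for the potential `ψ`. -/
def IsGibbs (S : CIFS) (ψ : ℝ → ℝ) (ν : Measure ℝ) : Prop :=
  ∃ c : ℝ, 1 ≤ c ∧ ∀ n : ℕ, ∀ x : ℕ → Fin (S.d + 1),
    c⁻¹ * Real.exp (S.birk ψ n x) ≤ (ν (S.cyl (S.code x n))).toReal ∧
      (ν (S.cyl (S.code x n))).toReal ≤ c * Real.exp (S.birk ψ n x)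

/-- the set `E` of codes which are eventually constant equal to `0` or to `1`;
`L* = L \ Φ(E)`. -/
def Ecode (S : CIFS) : Set (ℕ → Fin (S.d + 1)) :=
  {x | ∃ i : Fin (S.d + 1), (i = 0 ∨ i = 1) ∧ ∃ n : ℕ, ∀ k ≥ n, x k = i}

/-- the code `x` has an `i`-block of length `k` at the `n`-th level:
`x_n ≠ i`, `x_{n+k+1} ≠ i` and `x_{n+m} = i` for `1 ≤ m ≤ k`
(recall `x j` is the letter `x_{j+1}`). -/
def HasBlock (S : CIFS) (x : ℕ → Fin (S.d + 1)) (i : Fin (S.d + 1)) (k n : ℕ) : Prop :=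
  x (n - 1) ≠ i ∧ x (n + k) ≠ i ∧ ∀ m : ℕ, 1 ≤ m → m ≤ k → x (n + m - 1) = i

/-- the labelling convention: `f 0 (X)` is the leftmost and `f 1 (X)` the rightmost
interval of the first level. -/
def Labeled (S : CIFS) : Prop :=
  (∀ a : Fin (S.d + 1), a ≠ 0 → ∀ u ∈ S.f 0 '' S.X, ∀ v ∈ S.f a '' S.X, u < v) ∧
  (∀ a : Fin (S.d + 1), a ≠ 1 → ∀ u ∈ S.f 1 '' S.X, ∀ v ∈ S.f a '' S.X, v < u)

end CIFS

/-- the distribution function `F(t) = ν((-∞, t])` of a measure `ν`. -/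
def distFun (ν : Measure ℝ) : ℝ → ℝ := fun t => (ν (Iic t)).toReal

/-- the `α`-Hölder difference quotient `|F(ξ) - F(η)| / |ξ - η|^α`. -/
def hquot (F : ℝ → ℝ) (α ξ η : ℝ) : ℝ := |F ξ - F η| / |ξ - η| ^ α

/-- the `α`-Hölder derivative of `F` at `ξ` exists in `[0,∞]` and equals `ℓ`. -/
def HolderDerivAt (F : ℝ → ℝ) (α ξ : ℝ) (ℓ : ℝ≥0∞) : Prop :=
  Tendsto (fun η => ENNReal.ofReal (hquot F α ξ η)) (nhdsWithin ξ {ξ}ᶜ) (nhds ℓ)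

/-- the set `Λ_ψ^α` of points of `L` where the `α`-Hölder derivative of the
distribution function of the Gibbs measure `ν = ν_ψ` does not exist in `[0,∞]`. -/
def CIFS.Lambda (S : CIFS) (ψ : ℝ → ℝ) (α : ℝ) (ν : Measure ℝ) : Set ℝ :=
  {ξ ∈ S.L | ¬∃ ℓ : ℝ≥0∞, HolderDerivAt (distFun ν) α ξ ℓ}

namespace CIFS
variable (S : CIFS)

lemma x01 : S.x₀ ≤ S.x₁ := S.x_lt.le

lemma X_nonempty : S.X.Nonempty := ⟨S.x₀, le_refl _, S.x01⟩

lemma X_subset_Y : S.X ⊆ Ioo S.y₀ S.y₁ := fun t ht =>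
  ⟨lt_of_lt_of_le S.y₀_lt ht.1, lt_of_le_of_lt ht.2 S.y₁_gt⟩

lemma f_maps_X (a : Fin (S.d + 1)) : MapsTo (S.f a) S.X S.X :=
  fun t ht => Ioo_subset_Icc_self (S.maps_X a ht)

lemma fw_nil : S.fw [] = id := rfl

lemma fw_cons (a : Fin (S.d + 1)) (ω : List (Fin (S.d + 1))) :
    S.fw (a :: ω) = S.f a ∘ S.fw ω := rfl

lemma fw_append (ω τ : List (Fin (S.d + 1))) :
    S.fw (ω ++ τ) = S.fw ω ∘ S.fw τ := by
  induction ω with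
  | nil => rfl
  | cons a ω ih => simp [fw_cons, ih, Function.comp_assoc]

lemma fw_maps_X (ω : List (Fin (S.d + 1))) : MapsTo (S.fw ω) S.X S.X := by
  induction ω with
  | nil => exact fun t ht => ht
  | cons a ω ih => exact (S.f_maps_X a).comp ih

lemma fw_contr (ω : List (Fin (S.d + 1))) :
    ∀ u ∈ S.X, ∀ v ∈ S.X, |S.fw ω u - S.fw ω v| ≤ S.r ^ ω.length * |u - v| := by
  induction ω with
  | nil => intro u _ v _; simp only [fw_nil, id_eq, List.length_nil, pow_zero, one_mul]; exact le_refl _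
  | cons a ω ih =>
      intro u hu v hv
      calc |S.f a (S.fw ω u) - S.f a (S.fw ω v)| ≤ S.r * |S.fw ω u - S.fw ω v| :=
            S.contr a _ (S.fw_maps_X ω hu) _ (S.fw_maps_X ω hv)
        _ ≤ S.r * (S.r ^ ω.length * |u - v|) := by
            exact mul_le_mul_of_nonneg_left (ih u hu v hv) S.r_pos.le
        _ = S.r ^ (a :: ω).length * |u - v| := by ring_nf; rw [List.length_cons]; ring

lemma fw_injOn (ω : List (Fin (S.d + 1))) : InjOn (S.fw ω) S.X := by
  induction ω with
  | nil => exact injOn_id _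
  | cons a ω ih =>
      intro u hu v hv h
      exact ih hu hv <| (S.injOn_Y a) (S.X_subset_Y (S.fw_maps_X ω hu))
        (S.X_subset_Y (S.fw_maps_X ω hv)) h

lemma fw_continuousOn (ω : List (Fin (S.d + 1))) : ContinuousOn (S.fw ω) S.X := by
  have : LipschitzOnWith (⟨S.r, S.r_pos.le⟩ ^ ω.length) (S.fw ω) S.X := by
    intro u hu v hv
    rw [edist_dist, edist_dist, ← ENNReal.ofReal_coe_nnreal, ← ENNReal.ofReal_mul (by positivity)]
    refine ENNReal.ofReal_le_ofReal ?_
    have := S.fw_contr ω u hu v hv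
    have h2 : ((⟨S.r, S.r_pos.le⟩ ^ ω.length : ℝ≥0) : ℝ) = S.r ^ ω.length := NNReal.coe_pow _ _
    rw [Real.dist_eq, Real.dist_eq, h2]; exact this
  exact this.continuousOn

lemma code_zero (x : ℕ → Fin (S.d + 1)) : S.code x 0 = [] := rfl

lemma code_succ (x : ℕ → Fin (S.d + 1)) (n : ℕ) :
    S.code x (n + 1) = S.code x n ++ [x n] := by
  simp [code, List.range_succ]

lemma code_cons (x : ℕ → Fin (S.d + 1)) (n : ℕ) :
    S.code x (n + 1) = x 0 :: S.code (S.shift x) n := by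
  simp [code, List.range_succ_eq_map, shift, List.map_map, Function.comp_def, Nat.add_comm]

lemma length_code (x : ℕ → Fin (S.d + 1)) (n : ℕ) : (S.code x n).length = n := by
  simp [code]

/-- the `n`-th level cylinder-interval of the code `x`. -/
def K (x : ℕ → Fin (S.d + 1)) (n : ℕ) : Set ℝ := S.fw (S.code x n) '' S.X

lemma K_zero (x : ℕ → Fin (S.d + 1)) : S.K x 0 = S.X := by simp [K, code_zero, fw_nil]

lemma K_nonempty (x : ℕ → Fin (S.d + 1)) (n : ℕ) : (S.K x n).Nonempty :=
  (S.X_nonempty).image _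

lemma K_compact (x : ℕ → Fin (S.d + 1)) (n : ℕ) : IsCompact (S.K x n) :=
  (isCompact_Icc).image_of_continuousOn (S.fw_continuousOn _)

lemma K_succ_subset (x : ℕ → Fin (S.d + 1)) (n : ℕ) : S.K x (n + 1) ⊆ S.K x n := by
  rw [K, K, code_succ, fw_append]
  rintro - ⟨t, ht, rfl⟩
  exact ⟨S.fw [x n] t, S.fw_maps_X [x n] ht, rfl⟩

lemma K_antitone (x : ℕ → Fin (S.d + 1)) : Antitone (S.K x) :=
  antitone_nat_of_succ_le fun n => S.K_succ_subset x n

lemma K_subset_X (x : ℕ → Fin (S.d + 1)) (n : ℕ) : S.K x n ⊆ S.X := by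
  rintro - ⟨t, ht, rfl⟩; exact S.fw_maps_X _ ht

lemma K_diam (x : ℕ → Fin (S.d + 1)) (n : ℕ) :
    ∀ u ∈ S.K x n, ∀ v ∈ S.K x n, |u - v| ≤ S.r ^ n * (S.x₁ - S.x₀) := by
  rintro - ⟨s, hs, rfl⟩ - ⟨t, ht, rfl⟩
  calc |S.fw (S.code x n) s - S.fw (S.code x n) t| ≤ S.r ^ (S.code x n).length * |s - t| :=
        S.fw_contr _ s hs t ht
    _ ≤ S.r ^ n * (S.x₁ - S.x₀) := by
        rw [S.length_code]
        refine mul_le_mul_of_nonneg_left ?_ (pow_nonneg S.r_pos.le n)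
        rw [abs_sub_le_iff]
        constructor <;> linarith [hs.1, hs.2, ht.1, ht.2]

end CIFS
namespace CIFS
variable (S : CIFS)

lemma iInter_K_nonempty (x : ℕ → Fin (S.d + 1)) : (⋂ n, S.K x n).Nonempty :=
  IsCompact.nonempty_iInter_of_sequence_nonempty_isCompact_isClosed _
    (fun n => S.K_succ_subset x n) (fun n => S.K_nonempty x n) (S.K_compact x 0)
    (fun n => (S.K_compact x n).isClosed)

lemma iInter_K_eq (x : ℕ → Fin (S.d + 1)) : ⋂ n, S.K x n = ⋂ n, S.fw (S.code x n) '' S.X := rfl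

lemma Phi_mem_iInter (x : ℕ → Fin (S.d + 1)) : S.Φ x ∈ ⋂ n, S.K x n := by
  have hc : IsCompact (⋂ n, S.K x n) :=
    (S.K_compact x 0).of_isClosed_subset (isClosed_iInter fun n => (S.K_compact x n).isClosed)
      (iInter_subset _ 0)
  exact hc.sSup_mem (S.iInter_K_nonempty x)

lemma Phi_mem_K (x : ℕ → Fin (S.d + 1)) (n : ℕ) : S.Φ x ∈ S.K x n := by
  have := S.Phi_mem_iInter x; exact mem_iInter.1 this n

lemma Phi_mem_X (x : ℕ → Fin (S.d + 1)) : S.Φ x ∈ S.X := by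
  have := S.Phi_mem_K x 0; rwa [K_zero] at this

lemma Phi_mem_L (x : ℕ → Fin (S.d + 1)) : S.Φ x ∈ S.L := by
  refine mem_iInter.2 fun n => ?_
  exact mem_biUnion (S.length_code x n) (S.Phi_mem_K x n)

lemma Phi_dist (x : ℕ → Fin (S.d + 1)) (n : ℕ) {η : ℝ} (hη : η ∈ S.K x n) :
    |S.Φ x - η| ≤ S.r ^ n * (S.x₁ - S.x₀) :=
  S.K_diam x n _ (S.Phi_mem_K x n) _ hη

lemma eq_of_mem_all_K {u v : ℝ} (x : ℕ → Fin (S.d + 1))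
    (hu : ∀ n, u ∈ S.K x n) (hv : ∀ n, v ∈ S.K x n) : u = v := by
  have h : ∀ n : ℕ, |u - v| ≤ S.r ^ n * (S.x₁ - S.x₀) := fun n =>
    S.K_diam x n u (hu n) v (hv n)
  have hlim : Tendsto (fun n : ℕ => S.r ^ n * (S.x₁ - S.x₀)) atTop (nhds 0) := by
    have := tendsto_pow_atTop_nhds_zero_of_lt_one S.r_pos.le S.r_lt_one
    simpa using this.mul_const (S.x₁ - S.x₀)
  have : |u - v| ≤ 0 := le_of_tendsto_of_tendsto' tendsto_const_nhds hlim h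
  have : |u - v| = 0 := le_antisymm this (abs_nonneg _)
  rwa [abs_eq_zero, sub_eq_zero] at this

lemma shift_mem_K (x : ℕ → Fin (S.d + 1)) (n : ℕ) :
    S.f (x 0) (S.Φ (S.shift x)) ∈ S.K x (n + 1) := by
  have h := S.Phi_mem_K (S.shift x) n
  rw [K, code_cons, fw_cons]
  obtain ⟨t, ht, h'⟩ := h
  exact ⟨t, ht, by simp [K] at h' ⊢; rw [h']⟩

lemma Phi_rec (x : ℕ → Fin (S.d + 1)) : S.Φ x = S.f (x 0) (S.Φ (S.shift x)) := by
  refine S.eq_of_mem_all_K x (fun n => S.Phi_mem_K x n) (fun n => ?_)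
  cases n with
  | zero => exact S.K_antitone x (Nat.zero_le 1) (S.shift_mem_K x 0)
  | succ m => exact S.shift_mem_K x m

/-- the `n`-fold shift. -/
def shiftn (n : ℕ) (x : ℕ → Fin (S.d + 1)) : ℕ → Fin (S.d + 1) := fun j => x (j + n)

lemma shiftn_zero (x : ℕ → Fin (S.d + 1)) : S.shiftn 0 x = x := rfl

lemma shift_shiftn (n : ℕ) (x : ℕ → Fin (S.d + 1)) :
    S.shift (S.shiftn n x) = S.shiftn (n + 1) x := by
  funext j; simp only [shift, shiftn]; congr 1; omega

lemma shiftn_zero_eval (n : ℕ) (x : ℕ → Fin (S.d + 1)) : (S.shiftn n x) 0 = x n := by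
  simp [shiftn]

lemma shiftn_shift (m : ℕ) (x : ℕ → Fin (S.d + 1)) :
    S.shiftn m (S.shift x) = S.shiftn (m + 1) x := by
  funext j; simp only [shift, shiftn]; exact congrArg x (by omega)

lemma Phi_iter (x : ℕ → Fin (S.d + 1)) (n : ℕ) :
    S.Φ x = S.fw (S.code x n) (S.Φ (S.shiftn n x)) := by
  induction n generalizing x with
  | zero => simp [code_zero, fw_nil, shiftn_zero]
  | succ m ih =>
      rw [code_cons, fw_cons, S.Phi_rec x]
      simp only [Function.comp_apply]
      rw [ih (S.shift x), shiftn_shift]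

lemma Phi_shiftn_mem_Ioo (x : ℕ → Fin (S.d + 1)) (n : ℕ) :
    S.Φ (S.shiftn n x) ∈ Ioo S.x₀ S.x₁ := by
  rw [S.Phi_rec (S.shiftn n x)]
  exact S.maps_X _ (S.Phi_mem_X _)

lemma Phi_injective : Function.Injective S.Φ := by
  intro x y hxy
  by_contra hne
  have hex : ∃ n, x n ≠ y n := by
    by_contra h
    push_neg at h
    exact hne (funext h)
  classical
  let n := Nat.find hex
  have hn : x n ≠ y n := Nat.find_spec hex
  have hagree : ∀ k < n, x k = y k := fun k hk => by
    by_contra h; exact Nat.find_min hex hk h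
  have hcode : S.code x n = S.code y n := by
    simp only [code]
    exact List.map_congr_left fun k hk => hagree k (List.mem_range.1 hk)
  have hx1 : S.Φ (S.shiftn n x) ∈ S.f (x n) '' S.X := by
    have := S.Phi_mem_K (S.shiftn n x) 1
    rw [K] at this
    convert this using 2
    simp [code, fw, List.range_succ, shiftn_zero_eval]
  have hy1 : S.Φ (S.shiftn n y) ∈ S.f (y n) '' S.X := by
    have := S.Phi_mem_K (S.shiftn n y) 1
    rw [K] at this
    convert this using 2
    simp [code, fw, List.range_succ, shiftn_zero_eval]
  have hdisj := S.sep (x n) (y n) hn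
  have h1 : S.Φ (S.shiftn n x) ≠ S.Φ (S.shiftn n y) := by
    intro h
    exact (hdisj.ne_of_mem hx1 (h ▸ hy1)) rfl
  apply h1
  refine S.fw_injOn (S.code x n) ?_ ?_ ?_
  · exact S.Phi_mem_X _
  · exact S.Phi_mem_X _
  · rw [← S.Phi_iter x n, hcode, ← S.Phi_iter y n, hxy]

lemma codeOf_Phi (x : ℕ → Fin (S.d + 1)) : S.codeOf (S.Φ x) = x :=
  Function.leftInverse_invFun S.Phi_injective x

lemma geom_Phi (x : ℕ → Fin (S.d + 1)) :
    S.geom (S.Φ x) = Real.log |deriv (S.f (x 0)) (S.Φ (S.shift x))| := by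
  rw [geom, codeOf_Phi]

lemma birk_succ (g : ℝ → ℝ) (n : ℕ) (x : ℕ → Fin (S.d + 1)) :
    S.birk g (n + 1) x = g (S.Φ x) + S.birk g n (S.shift x) := by
  rw [birk, Finset.sum_range_succ', birk, add_comm]
  congr 1

lemma birk_eq_sum_shiftn (g : ℝ → ℝ) (n : ℕ) (x : ℕ → Fin (S.d + 1)) :
    S.birk g n x = ∑ k ∈ Finset.range n, g (S.Φ (S.shiftn k x)) := rfl

end CIFS
namespace CIFS
variable (S : CIFS)

lemma deriv_continuousOn (a : Fin (S.d + 1)) :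
    ContinuousOn (deriv (S.f a)) (Ioo S.y₀ S.y₁) :=
  (S.holder a).continuousOn S.ε_pos

lemma deriv_holder_dist (a : Fin (S.d + 1)) {p q : ℝ}
    (hp : p ∈ Ioo S.y₀ S.y₁) (hq : q ∈ Ioo S.y₀ S.y₁) :
    |deriv (S.f a) p - deriv (S.f a) q| ≤ (S.hc : ℝ) * |p - q| ^ (S.ε : ℝ) := by
  have h := (S.holder a).edist_le hp hq
  rw [edist_dist, edist_dist, ENNReal.ofReal_rpow_of_nonneg dist_nonneg S.ε.coe_nonneg,
    ← ENNReal.ofReal_coe_nnreal, ← ENNReal.ofReal_mul S.hc.coe_nonneg] at h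
  have h' := (ENNReal.ofReal_le_ofReal_iff (by positivity)).1 h
  rwa [Real.dist_eq, Real.dist_eq] at h'

lemma exists_deriv_lower : ∃ m : ℝ, 0 < m ∧ ∀ a, ∀ t ∈ S.X, m ≤ |deriv (S.f a) t| := by
  have key : ∀ a : Fin (S.d + 1), ∃ m : ℝ, 0 < m ∧ ∀ t ∈ S.X, m ≤ |deriv (S.f a) t| := by
    intro a
    have hcont : ContinuousOn (fun t => |deriv (S.f a) t|) S.X :=
      (continuous_abs.comp_continuousOn ((S.deriv_continuousOn a).mono S.X_subset_Y))
    obtain ⟨t₀, ht₀, hmin⟩ := (isCompact_Icc (a := S.x₀) (b := S.x₁)).exists_isMinOn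
      S.X_nonempty hcont
    exact ⟨|deriv (S.f a) t₀|, abs_pos.2 (S.deriv_ne a t₀ (S.X_subset_Y ht₀)),
      fun t ht => hmin ht⟩
  choose mf hmf1 hmf2 using key
  classical
  refine ⟨Finset.univ.inf' ⟨0, Finset.mem_univ 0⟩ mf, ?_, ?_⟩
  · apply (Finset.lt_inf'_iff _).2
    exact fun a _ => hmf1 a
  · intro a t ht
    exact le_trans (Finset.inf'_le mf (Finset.mem_univ a)) (hmf2 a t ht)

lemma f_abs_sub_le (a : Fin (S.d + 1)) {u v C : ℝ} (hu : u ∈ S.X) (hv : v ∈ S.X)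
    (hbound : ∀ z ∈ Icc (min u v) (max u v), |deriv (S.f a) z| ≤ C) :
    |S.f a u - S.f a v| ≤ C * |u - v| := by
  have key : ∀ p q : ℝ, p ∈ S.X → q ∈ S.X → p ≤ q →
      (∀ z ∈ Icc p q, |deriv (S.f a) z| ≤ C) → |S.f a p - S.f a q| ≤ C * |q - p| := by
    intro p q hp hq hpq hb
    have hIcc : Icc p q ⊆ S.X := Icc_subset_Icc hp.1 hq.2
    have hder : ∀ z ∈ Icc p q, HasDerivWithinAt (S.f a) (deriv (S.f a) z) (Icc p q) z :=
      fun z hz => ((S.diff_Y a z (S.X_subset_Y (hIcc hz))).hasDerivAt).hasDerivWithinAt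
    have := norm_image_sub_le_of_norm_deriv_le_segment' hder
      (fun z hz => hb z (Ico_subset_Icc_self hz)) q (right_mem_Icc.2 hpq)
    rw [Real.norm_eq_abs] at this
    rw [abs_sub_comm, abs_of_nonneg (by linarith : (0:ℝ) ≤ q - p)]
    exact this
  rcases le_total u v with h | h
  · have := key u v hu hv h (by rwa [min_eq_left h, max_eq_right h] at hbound)
    rwa [abs_sub_comm v u] at this
  · have := key v u hv hu h (by rwa [min_eq_right h, max_eq_left h] at hbound)
    rwa [abs_sub_comm (S.f a v)] at this
    
lemma deriv_ratio {m : ℝ} (hm : 0 < m) (hml : ∀ a, ∀ t ∈ S.X, m ≤ |deriv (S.f a) t|)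
    (a : Fin (S.d + 1)) {p q : ℝ} (hp : p ∈ S.X) (hq : q ∈ S.X) :
    |deriv (S.f a) p| ≤ |deriv (S.f a) q| * Real.exp ((S.hc / m) * |p - q| ^ (S.ε : ℝ)) := by
  set t : ℝ := |p - q| ^ (S.ε : ℝ) with ht
  have ht0 : 0 ≤ t := Real.rpow_nonneg (abs_nonneg _) _
  have h1 : |deriv (S.f a) p| ≤ |deriv (S.f a) q| + (S.hc : ℝ) * t := by
    have := S.deriv_holder_dist a (S.X_subset_Y hp) (S.X_subset_Y hq)
    have h2 := abs_sub_abs_le_abs_sub (deriv (S.f a) p) (deriv (S.f a) q)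
    linarith
  have hq0 : m ≤ |deriv (S.f a) q| := hml a q hq
  have h3 : |deriv (S.f a) q| + (S.hc : ℝ) * t ≤
      |deriv (S.f a) q| * (1 + (S.hc / m) * t) := by
    have : (S.hc : ℝ) * t ≤ |deriv (S.f a) q| * ((S.hc / m) * t) := by
      rw [div_mul_eq_mul_div, mul_comm (|deriv (S.f a) q|), div_mul_eq_mul_div,
        le_div_iff₀ hm]
      have : (S.hc : ℝ) * t * m ≤ (S.hc : ℝ) * t * |deriv (S.f a) q| := by
        refine mul_le_mul_of_nonneg_left hq0 (by positivity)
      linarith [this]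
    linarith [this]
  have h4 : 1 + (S.hc / m) * t ≤ Real.exp ((S.hc / m) * t) := by
    have := Real.add_one_le_exp ((S.hc / m) * t)
    linarith
  calc |deriv (S.f a) p| ≤ |deriv (S.f a) q| * (1 + (S.hc / m) * t) := le_trans h1 h3
    _ ≤ |deriv (S.f a) q| * Real.exp ((S.hc / m) * t) :=
        mul_le_mul_of_nonneg_left h4 (abs_nonneg _)

lemma letter_bound {m : ℝ} (hm : 0 < m) (hml : ∀ a, ∀ t ∈ S.X, m ≤ |deriv (S.f a) t|)
    (a : Fin (S.d + 1)) {q c : ℝ} (hq : q ∈ S.X) (hc0 : 0 ≤ c) {u v : ℝ}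
    (hu : u ∈ S.X) (hv : v ∈ S.X) (huq : |u - q| ≤ c) (hvq : |v - q| ≤ c) :
    |S.f a u - S.f a v| ≤
      |deriv (S.f a) q| * Real.exp ((S.hc / m) * c ^ (S.ε : ℝ)) * |u - v| := by
  refine S.f_abs_sub_le a hu hv ?_
  intro z hz
  have hzX : z ∈ S.X := by
    constructor
    · exact le_trans (le_min hu.1 hv.1) hz.1
    · exact le_trans hz.2 (max_le hu.2 hv.2)
  have hzq : |z - q| ≤ c := by
    rw [abs_le] at huq hvq ⊢
    constructor
    · have : q - c ≤ min u v := le_min (by linarith [huq.1]) (by linarith [hvq.1])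
      linarith [hz.1]
    · have : max u v ≤ q + c := max_le (by linarith [huq.2]) (by linarith [hvq.2])
      linarith [hz.2]
  calc |deriv (S.f a) z| ≤ |deriv (S.f a) q| * Real.exp ((S.hc / m) * |z - q| ^ (S.ε : ℝ)) :=
        S.deriv_ratio hm hml a hzX hq
    _ ≤ |deriv (S.f a) q| * Real.exp ((S.hc / m) * c ^ (S.ε : ℝ)) := by
        refine mul_le_mul_of_nonneg_left ?_ (abs_nonneg _)
        refine Real.exp_le_exp.2 ?_
        refine mul_le_mul_of_nonneg_left ?_ (by positivity)
        exact Real.rpow_le_rpow (abs_nonneg _) hzq S.ε.coe_nonneg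

end CIFS
namespace CIFS
variable (S : CIFS)

lemma exp_geom (x : ℕ → Fin (S.d + 1)) :
    Real.exp (S.geom (S.Φ x)) = |deriv (S.f (x 0)) (S.Φ (S.shift x))| := by
  rw [S.geom_Phi x]
  exact Real.exp_log (abs_pos.2 (S.deriv_ne _ _ (S.X_subset_Y (S.Phi_mem_X _))))

lemma rpow_pow_eq (n : ℕ) : (S.r ^ n) ^ (S.ε : ℝ) = (S.r ^ (S.ε : ℝ)) ^ n := by
  rw [← Real.rpow_natCast S.r n, ← Real.rpow_mul S.r_pos.le, mul_comm,
    Real.rpow_mul S.r_pos.le, Real.rpow_natCast]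

lemma distortion {m : ℝ} (hm : 0 < m) (hml : ∀ a, ∀ t ∈ S.X, m ≤ |deriv (S.f a) t|)
    (n : ℕ) (x : ℕ → Fin (S.d + 1)) {s t : ℝ} (hs : s ∈ S.X) (ht : t ∈ S.X) :
    |S.fw (S.code x n) s - S.fw (S.code x n) t| ≤
      Real.exp ((S.hc / m) * (S.x₁ - S.x₀) ^ (S.ε : ℝ) *
          ∑ k ∈ Finset.range n, (S.r ^ (S.ε : ℝ)) ^ k) *
        Real.exp (S.birk S.geom n x) * |s - t| := by
  induction n generalizing x s t with
  | zero =>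
      simp only [code_zero, fw_nil, id_eq, Finset.range_zero, Finset.sum_empty, mul_zero,
        Real.exp_zero, one_mul, birk, Finset.sum_empty]
      simp
  | succ n ih =>
      have hq : S.Φ (S.shift x) ∈ S.X := S.Phi_mem_X _
      have hqK : S.Φ (S.shift x) ∈ S.K (S.shift x) n := S.Phi_mem_K _ n
      have hAs : S.fw (S.code (S.shift x) n) s ∈ S.K (S.shift x) n := ⟨s, hs, rfl⟩
      have hAt : S.fw (S.code (S.shift x) n) t ∈ S.K (S.shift x) n := ⟨t, ht, rfl⟩
      have hds := S.K_diam (S.shift x) n _ hAs _ hqK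
      have hdt := S.K_diam (S.shift x) n _ hAt _ hqK
      have hc0 : (0:ℝ) ≤ S.r ^ n * (S.x₁ - S.x₀) :=
        mul_nonneg (pow_nonneg S.r_pos.le n) (sub_nonneg.2 S.x01)
      have hlb := S.letter_bound hm hml (x 0) hq hc0
        (S.K_subset_X _ n hAs) (S.K_subset_X _ n hAt) hds hdt
      have hexp : (S.hc / m) * (S.r ^ n * (S.x₁ - S.x₀)) ^ (S.ε : ℝ) =
          (S.hc / m) * (S.x₁ - S.x₀) ^ (S.ε : ℝ) * (S.r ^ (S.ε : ℝ)) ^ n := by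
        rw [Real.mul_rpow (pow_nonneg S.r_pos.le n) (sub_nonneg.2 S.x01), S.rpow_pow_eq n]
        ring
      rw [code_cons, fw_cons]
      simp only [Function.comp_apply]
      calc |S.f (x 0) (S.fw (S.code (S.shift x) n) s) - S.f (x 0) (S.fw (S.code (S.shift x) n) t)|
          ≤ |deriv (S.f (x 0)) (S.Φ (S.shift x))| *
              Real.exp ((S.hc / m) * (S.r ^ n * (S.x₁ - S.x₀)) ^ (S.ε : ℝ)) *
              |S.fw (S.code (S.shift x) n) s - S.fw (S.code (S.shift x) n) t| := hlb
        _ ≤ |deriv (S.f (x 0)) (S.Φ (S.shift x))| *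
              Real.exp ((S.hc / m) * (S.r ^ n * (S.x₁ - S.x₀)) ^ (S.ε : ℝ)) *
              (Real.exp ((S.hc / m) * (S.x₁ - S.x₀) ^ (S.ε : ℝ) *
                  ∑ k ∈ Finset.range n, (S.r ^ (S.ε : ℝ)) ^ k) *
                Real.exp (S.birk S.geom n (S.shift x)) * |s - t|) := by
            refine mul_le_mul_of_nonneg_left (ih (S.shift x) hs ht) (by positivity)
        _ = Real.exp ((S.hc / m) * (S.x₁ - S.x₀) ^ (S.ε : ℝ) *
              ∑ k ∈ Finset.range (n + 1), (S.r ^ (S.ε : ℝ)) ^ k) *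
            Real.exp (S.birk S.geom (n + 1) x) * |s - t| := by
            rw [← S.exp_geom x, hexp, Finset.sum_range_succ, S.birk_succ, mul_add,
              Real.exp_add, Real.exp_add]
            ring

lemma distortion' {m : ℝ} (hm : 0 < m) (hml : ∀ a, ∀ t ∈ S.X, m ≤ |deriv (S.f a) t|)
    (n : ℕ) (x : ℕ → Fin (S.d + 1)) {s t : ℝ} (hs : s ∈ S.X) (ht : t ∈ S.X) :
    |S.fw (S.code x n) s - S.fw (S.code x n) t| ≤
      Real.exp ((S.hc / m) * (S.x₁ - S.x₀) ^ (S.ε : ℝ) / (1 - S.r ^ (S.ε : ℝ))) *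
        Real.exp (S.birk S.geom n x) * (S.x₁ - S.x₀) := by
  have hq0 : (0:ℝ) ≤ S.r ^ (S.ε : ℝ) := Real.rpow_nonneg S.r_pos.le _
  have hq1 : S.r ^ (S.ε : ℝ) < 1 :=
    Real.rpow_lt_one S.r_pos.le S.r_lt_one (by exact_mod_cast S.ε_pos)
  have hgeo : ∑ k ∈ Finset.range n, (S.r ^ (S.ε : ℝ)) ^ k ≤ 1 / (1 - S.r ^ (S.ε : ℝ)) := by
    rw [le_div_iff₀ (by linarith)]
    have h := geom_sum_mul (S.r ^ (S.ε : ℝ)) n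
    nlinarith [pow_nonneg hq0 n]
  have hc0 : (0:ℝ) ≤ (S.hc / m) * (S.x₁ - S.x₀) ^ (S.ε : ℝ) := by
    have h1 : (0:ℝ) ≤ (S.hc : ℝ) := S.hc.coe_nonneg
    have h2 : (0:ℝ) ≤ (S.x₁ - S.x₀) ^ (S.ε : ℝ) := Real.rpow_nonneg (sub_nonneg.2 S.x01) _
    positivity
  calc |S.fw (S.code x n) s - S.fw (S.code x n) t| ≤
      Real.exp ((S.hc / m) * (S.x₁ - S.x₀) ^ (S.ε : ℝ) *
          ∑ k ∈ Finset.range n, (S.r ^ (S.ε : ℝ)) ^ k) *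
        Real.exp (S.birk S.geom n x) * |s - t| := S.distortion hm hml n x hs ht
    _ ≤ Real.exp ((S.hc / m) * (S.x₁ - S.x₀) ^ (S.ε : ℝ) / (1 - S.r ^ (S.ε : ℝ))) *
        Real.exp (S.birk S.geom n x) * (S.x₁ - S.x₀) := by
      have h1 : Real.exp ((S.hc / m) * (S.x₁ - S.x₀) ^ (S.ε : ℝ) *
          ∑ k ∈ Finset.range n, (S.r ^ (S.ε : ℝ)) ^ k) ≤
          Real.exp ((S.hc / m) * (S.x₁ - S.x₀) ^ (S.ε : ℝ) / (1 - S.r ^ (S.ε : ℝ))) := by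
        refine Real.exp_le_exp.2 ?_
        calc (S.hc / m) * (S.x₁ - S.x₀) ^ (S.ε : ℝ) * ∑ k ∈ Finset.range n,
              (S.r ^ (S.ε : ℝ)) ^ k
            ≤ (S.hc / m) * (S.x₁ - S.x₀) ^ (S.ε : ℝ) * (1 / (1 - S.r ^ (S.ε : ℝ))) :=
              mul_le_mul_of_nonneg_left hgeo hc0
          _ = (S.hc / m) * (S.x₁ - S.x₀) ^ (S.ε : ℝ) / (1 - S.r ^ (S.ε : ℝ)) := by ring
      have h2 : |s - t| ≤ S.x₁ - S.x₀ := by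
        rw [abs_sub_le_iff]; constructor <;> linarith [hs.1, hs.2, ht.1, ht.2]
      have := mul_le_mul h1 h2 (abs_nonneg _) (Real.exp_pos _).le
      calc _ ≤ (Real.exp ((S.hc / m) * (S.x₁ - S.x₀) ^ (S.ε : ℝ) / (1 - S.r ^ (S.ε : ℝ))) *
          (S.x₁ - S.x₀)) * Real.exp (S.birk S.geom n x) := by
            rw [mul_right_comm]
            exact mul_le_mul_of_nonneg_right this (Real.exp_pos _).le
        _ = _ := by ring

end CIFS
namespace CIFS
variable (S : CIFS)

lemma code_eq_of_agree {x y : ℕ → Fin (S.d + 1)} {n : ℕ} (h : ∀ k < n, y k = x k) :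
    S.code y n = S.code x n := by
  simp only [code]
  exact List.map_congr_left fun k hk => h k (List.mem_range.1 hk)

lemma Phi_continuous : Continuous S.Φ := by
  rw [continuous_iff_continuousAt]
  intro x
  rw [ContinuousAt, Metric.tendsto_nhds]
  intro e he
  have hlim : Tendsto (fun n : ℕ => S.r ^ n * (S.x₁ - S.x₀)) atTop (nhds 0) := by
    have := tendsto_pow_atTop_nhds_zero_of_lt_one S.r_pos.le S.r_lt_one
    simpa using this.mul_const (S.x₁ - S.x₀)
  obtain ⟨n, hn⟩ := (hlim.eventually (gt_mem_nhds he)).exists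
  have hU : IsOpen {y : ℕ → Fin (S.d + 1) | ∀ k < n, y k = x k} := by
    have heq : {y : ℕ → Fin (S.d + 1) | ∀ k < n, y k = x k} =
        ⋂ k ∈ Finset.range n, (fun y : ℕ → Fin (S.d + 1) => y k) ⁻¹' {x k} := by
      ext y; simp [Finset.mem_range]
    rw [heq]
    exact isOpen_biInter_finset fun k _ =>
      (continuous_apply k).isOpen_preimage _ (isOpen_discrete _)
  have hmem : {y : ℕ → Fin (S.d + 1) | ∀ k < n, y k = x k} ∈ nhds x :=
    hU.mem_nhds (fun k _ => rfl)
  filter_upwards [hmem] with y hy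
  have hcode : S.code y n = S.code x n := S.code_eq_of_agree hy
  have : S.Φ y ∈ S.K x n := by
    have := S.Phi_mem_K y n
    rwa [K, hcode] at this
  have hd := S.K_diam x n _ this _ (S.Phi_mem_K x n)
  rw [Real.dist_eq]
  exact lt_of_le_of_lt hd hn

lemma shift_continuous : Continuous (S.shift) :=
  continuous_pi fun i => continuous_apply (i + 1)

lemma logderiv_continuous :
    Continuous fun y : ℕ → Fin (S.d + 1) =>
      Real.log |deriv (S.f (y 0)) (S.Φ (S.shift y))| := by
  rw [continuous_iff_continuousAt]
  intro x
  have hin : Continuous fun y : ℕ → Fin (S.d + 1) => S.Φ (S.shift y) :=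
    S.Phi_continuous.comp S.shift_continuous
  have hp : S.Φ (S.shift x) ∈ Ioo S.y₀ S.y₁ := S.X_subset_Y (S.Phi_mem_X _)
  have hd : ContinuousAt (deriv (S.f (x 0))) (S.Φ (S.shift x)) :=
    (S.deriv_continuousOn (x 0)).continuousAt (Ioo_mem_nhds hp.1 hp.2)
  have hne : |deriv (S.f (x 0)) (S.Φ (S.shift x))| ≠ 0 :=
    abs_ne_zero.2 (S.deriv_ne _ _ hp)
  have h1 : ContinuousAt (fun y : ℕ → Fin (S.d + 1) =>
      Real.log |deriv (S.f (x 0)) (S.Φ (S.shift y))|) x := by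
    have t1 : Tendsto (fun y : ℕ → Fin (S.d + 1) => S.Φ (S.shift y)) (nhds x)
        (nhds (S.Φ (S.shift x))) := hin.continuousAt
    have t3 : Tendsto (fun w : ℝ => Real.log |w|)
        (nhds (deriv (S.f (x 0)) (S.Φ (S.shift x))))
        (nhds (Real.log |deriv (S.f (x 0)) (S.Φ (S.shift x))|)) := by
      have habs : Tendsto (fun w : ℝ => |w|) (nhds (deriv (S.f (x 0)) (S.Φ (S.shift x))))
          (nhds |deriv (S.f (x 0)) (S.Φ (S.shift x))|) := continuous_abs.continuousAt
      exact (Real.continuousAt_log hne).comp habs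
    exact (t3.comp hd).comp t1
  refine h1.congr ?_
  have hU : IsOpen {y : ℕ → Fin (S.d + 1) | y 0 = x 0} := by
    have heq : {y : ℕ → Fin (S.d + 1) | y 0 = x 0} =
        (fun y : ℕ → Fin (S.d + 1) => y 0) ⁻¹' {x 0} := rfl
    rw [heq]
    exact (continuous_apply 0).isOpen_preimage _ (isOpen_discrete _)
  filter_upwards [hU.mem_nhds rfl] with y hy
  rw [show y 0 = x 0 from hy]

lemma exists_delta (α : ℝ) (ψ : ℝ → ℝ) (hψ : S.GoodPotential α ψ) :
    ∃ δ : ℝ, 0 < δ ∧ ∀ x : ℕ → Fin (S.d + 1), δ ≤ ψ (S.Φ x) - α * S.geom (S.Φ x) := by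
  obtain ⟨⟨cψ, eψ, heψ, hHol⟩, hneg, hpres, hgt⟩ := hψ
  set H : (ℕ → Fin (S.d + 1)) → ℝ := fun x =>
    ψ (S.Φ x) - α * Real.log |deriv (S.f (x 0)) (S.Φ (S.shift x))| with hH
  have hHgeom : ∀ x, H x = ψ (S.Φ x) - α * S.geom (S.Φ x) := by
    intro x; rw [hH]; simp only; rw [S.geom_Phi x]
  have hψc : Continuous fun x : ℕ → Fin (S.d + 1) => ψ (S.Φ x) :=
    (hHol.continuousOn heψ).comp_continuous S.Phi_continuous fun x => S.Phi_mem_L x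
  have hHc : Continuous H := hψc.sub (continuous_const.mul S.logderiv_continuous)
  have hne : (Set.univ : Set (ℕ → Fin (S.d + 1))).Nonempty := ⟨fun _ => 0, trivial⟩
  obtain ⟨z, -, hz⟩ := isCompact_univ.exists_isMinOn hne hHc.continuousOn
  refine ⟨H z, ?_, ?_⟩
  · rw [hHgeom z]
    have := hgt (S.Φ z) (S.Phi_mem_L z)
    linarith
  · intro x
    rw [← hHgeom x]
    exact hz (mem_univ x)

lemma birk_lower (α δ : ℝ) (ψ : ℝ → ℝ)
    (hδ : ∀ x : ℕ → Fin (S.d + 1), δ ≤ ψ (S.Φ x) - α * S.geom (S.Φ x))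
    (n : ℕ) (x : ℕ → Fin (S.d + 1)) :
    (n : ℝ) * δ ≤ S.birk ψ n x - α * S.birk S.geom n x := by
  rw [S.birk_eq_sum_shiftn, S.birk_eq_sum_shiftn, Finset.mul_sum, ← Finset.sum_sub_distrib]
  calc (n : ℝ) * δ = ∑ _k ∈ Finset.range n, δ := by
        rw [Finset.sum_const, Finset.card_range, nsmul_eq_mul]
    _ ≤ _ := Finset.sum_le_sum fun k _ => hδ (S.shiftn k x)

end CIFS
namespace CIFS
variable (S : CIFS)

lemma x0_mem : S.x₀ ∈ S.X := ⟨le_refl _, S.x01⟩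
lemma x1_mem : S.x₁ ∈ S.X := ⟨S.x01, le_refl _⟩

lemma fw_mono (ω : List (Fin (S.d + 1))) :
    StrictMonoOn (S.fw ω) S.X ∨ StrictAntiOn (S.fw ω) S.X :=
  ContinuousOn.strictMonoOn_of_injOn_Icc' S.x01 (S.fw_continuousOn ω) (S.fw_injOn ω)

lemma fw_mem_Ioo_endpoints (ω : List (Fin (S.d + 1))) {t : ℝ} (ht : t ∈ Ioo S.x₀ S.x₁) :
    S.fw ω t ∈ Ioo (min (S.fw ω S.x₀) (S.fw ω S.x₁)) (max (S.fw ω S.x₀) (S.fw ω S.x₁)) := by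
  have htX : t ∈ S.X := Ioo_subset_Icc_self ht
  rcases S.fw_mono ω with h | h
  · have hle : S.fw ω S.x₀ ≤ S.fw ω S.x₁ := (h S.x0_mem S.x1_mem S.x_lt).le
    rw [min_eq_left hle, max_eq_right hle]
    exact ⟨h S.x0_mem htX ht.1, h htX S.x1_mem ht.2⟩
  · have hle : S.fw ω S.x₁ ≤ S.fw ω S.x₀ := (h S.x0_mem S.x1_mem S.x_lt).le
    rw [min_eq_right hle, max_eq_left hle]
    exact ⟨h htX S.x1_mem ht.2, h S.x0_mem htX ht.1⟩

lemma cyl_subset (x : ℕ → Fin (S.d + 1)) (n : ℕ) :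
    S.cyl (S.code x n) ⊆
      Ioo (min (S.fw (S.code x n) S.x₀) (S.fw (S.code x n) S.x₁))
        (max (S.fw (S.code x n) S.x₀) (S.fw (S.code x n) S.x₁)) := by
  rintro - ⟨y, hy, rfl⟩
  rw [mem_setOf_eq, S.length_code] at hy
  rw [S.Phi_iter y n, hy]
  exact S.fw_mem_Ioo_endpoints (S.code x n) (S.Phi_shiftn_mem_Ioo y n)

lemma Phi_mem_Ioo_endpoints (x : ℕ → Fin (S.d + 1)) (n : ℕ) :
    S.Φ x ∈ Ioo (min (S.fw (S.code x n) S.x₀) (S.fw (S.code x n) S.x₁))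
      (max (S.fw (S.code x n) S.x₀) (S.fw (S.code x n) S.x₁)) := by
  rw [S.Phi_iter x n]
  exact S.fw_mem_Ioo_endpoints (S.code x n) (S.Phi_shiftn_mem_Ioo x n)

end CIFS

lemma distFun_Ioc (ν : Measure ℝ) [IsProbabilityMeasure ν] {a b : ℝ} (hab : a ≤ b) :
    (ν (Ioc a b)).toReal = distFun ν b - distFun ν a := by
  have hu : Iic a ∪ Ioc a b = Iic b := Iic_union_Ioc_eq_Iic hab
  have hdisj : Disjoint (Iic a) (Ioc a b) := Iic_disjoint_Ioc le_rfl
  have : ν (Iic b) = ν (Iic a) + ν (Ioc a b) := by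
    rw [← hu, measure_union hdisj measurableSet_Ioc]
  rw [distFun, distFun, this, ENNReal.toReal_add (measure_ne_top ν _) (measure_ne_top ν _)]
  ring
/-- For every `ξ ∈ L*` the upper `α`-Hölder derivative of `F_ψ` at `ξ` is infinite. -/
theorem limsup_hquot_eq_top (S : CIFS) (hlab : S.Labeled)
    (α : ℝ) (hα : 0 < α) (ψ : ℝ → ℝ) (hψ : S.GoodPotential α ψ)
    (ν : Measure ℝ) (hprob : IsProbabilityMeasure ν)
    (hsupp : ν S.Lᶜ = 0) (hgibbs : S.IsGibbs ψ ν) :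
    ∀ x : ℕ → Fin (S.d + 1), x ∉ S.Ecode →
      Filter.limsup (fun η => ENNReal.ofReal (hquot (distFun ν) α (S.Φ x) η))
        (nhdsWithin (S.Φ x) {S.Φ x}ᶜ) = ⊤ := by
  intro x _
  obtain ⟨m, hm, hml⟩ := S.exists_deriv_lower
  obtain ⟨δ, hδ0, hδ⟩ := S.exists_delta α ψ hψ
  obtain ⟨c, hc1, hgb⟩ := hgibbs
  have hc0 : (0:ℝ) < c := lt_of_lt_of_le one_pos hc1
  set ξ : ℝ := S.Φ x with hξdef
  set Cd : ℝ := (S.hc / m) * (S.x₁ - S.x₀) ^ (S.ε : ℝ) / (1 - S.r ^ (S.ε : ℝ)) with hCd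
  set L : ℝ := S.x₁ - S.x₀ with hL
  have hL0 : 0 < L := sub_pos.2 S.x_lt
  set P : ℝ := (Real.exp Cd * L) ^ α with hP
  have hP0 : 0 < P := Real.rpow_pos_of_pos (by positivity) α
  set K₀ : ℝ := c⁻¹ / (2 * P) with hK₀
  have hK₀0 : 0 < K₀ := by positivity
  -- the key pointwise estimate at level n
  have key : ∀ n : ℕ, ∃ η : ℝ, η ≠ ξ ∧ |ξ - η| ≤ S.r ^ n * L ∧
      c⁻¹ * Real.exp (S.birk ψ n x) / 2 /
        (Real.exp Cd * Real.exp (S.birk S.geom n x) * L) ^ α ≤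
        hquot (distFun ν) α ξ η := by
    intro n
    set p : ℝ := S.fw (S.code x n) S.x₀ with hp
    set q : ℝ := S.fw (S.code x n) S.x₁ with hq
    set a : ℝ := min p q with ha
    set b : ℝ := max p q with hb
    have hab : a ≤ b := min_le_max
    have hξIoo : ξ ∈ Ioo a b := S.Phi_mem_Ioo_endpoints x n
    have hcyl : S.cyl (S.code x n) ⊆ Ioc a b :=
      subset_trans (S.cyl_subset x n) Ioo_subset_Ioc_self
    have hmass : c⁻¹ * Real.exp (S.birk ψ n x) ≤ distFun ν b - distFun ν a := by
      have h1 := (hgb n x).1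
      have h2 : (ν (S.cyl (S.code x n))).toReal ≤ (ν (Ioc a b)).toReal :=
        (ENNReal.toReal_le_toReal (measure_ne_top ν _) (measure_ne_top ν _)).2
          (measure_mono hcyl)
      rw [distFun_Ioc ν hab] at h2
      linarith
    set Mn : ℝ := c⁻¹ * Real.exp (S.birk ψ n x) with hMn
    -- diameter bounds
    have hdn : ∀ η ∈ ({p, q} : Set ℝ), |ξ - η| ≤
        Real.exp Cd * Real.exp (S.birk S.geom n x) * L := by
      intro η hη
      have hd' : ∀ s ∈ S.X, |ξ - S.fw (S.code x n) s| ≤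
          Real.exp Cd * Real.exp (S.birk S.geom n x) * L := by
        intro s hs
        rw [hξdef, S.Phi_iter x n]
        exact S.distortion' hm hml n x (S.Phi_mem_X _) hs
      rcases hη with rfl | hη
      · exact hd' S.x₀ S.x0_mem
      · rw [mem_singleton_iff] at hη
        rw [hη]
        exact hd' S.x₁ S.x1_mem
    have hdr : ∀ η ∈ ({p, q} : Set ℝ), |ξ - η| ≤ S.r ^ n * L := by
      intro η hη
      have hηK : η ∈ S.K x n := by
        rcases hη with rfl | hη
        · exact ⟨S.x₀, S.x0_mem, rfl⟩
        · rw [mem_singleton_iff] at hη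
          exact hη ▸ ⟨S.x₁, S.x1_mem, rfl⟩
      exact S.Phi_dist x n hηK
    -- choose the good side
    have habmem : a ∈ ({p, q} : Set ℝ) ∧ b ∈ ({p, q} : Set ℝ) := by
      constructor
      · rcases min_cases p q with ⟨h, -⟩ | ⟨h, -⟩ <;> rw [ha, h]
        · exact mem_insert _ _
        · exact mem_insert_of_mem _ rfl
      · rcases max_cases p q with ⟨h, -⟩ | ⟨h, -⟩ <;> rw [hb, h]
        · exact mem_insert _ _
        · exact mem_insert_of_mem _ rfl
    obtain ⟨η, hηmem, hηne, hηhalf⟩ :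
        ∃ η, η ∈ ({p, q} : Set ℝ) ∧ η ≠ ξ ∧ Mn / 2 ≤ |distFun ν ξ - distFun ν η| := by
      by_cases hside : Mn / 2 ≤ distFun ν ξ - distFun ν a
      · exact ⟨a, habmem.1, hξIoo.1.ne, le_trans hside (le_abs_self _)⟩
      · refine ⟨b, habmem.2, hξIoo.2.ne', ?_⟩
        rw [abs_sub_comm]
        refine le_trans ?_ (le_abs_self _)
        push_neg at hside
        linarith
    refine ⟨η, hηne, hdr η hηmem, ?_⟩
    rw [hquot]
    have hne' : ξ - η ≠ 0 := sub_ne_zero.2 (Ne.symm hηne)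
    have h1 : (0:ℝ) < |ξ - η| ^ α := Real.rpow_pos_of_pos (abs_pos.2 hne') α
    have h2 : |ξ - η| ^ α ≤ (Real.exp Cd * Real.exp (S.birk S.geom n x) * L) ^ α :=
      Real.rpow_le_rpow (abs_nonneg _) (hdn η hηmem) hα.le
    exact div_le_div₀ (abs_nonneg _) hηhalf h1 h2
  -- lower bound of the quotient bound by K₀ * exp (n * δ)
  have keyQ : ∀ n : ℕ, K₀ * Real.exp ((n : ℝ) * δ) ≤
      c⁻¹ * Real.exp (S.birk ψ n x) / 2 /
        (Real.exp Cd * Real.exp (S.birk S.geom n x) * L) ^ α := by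
    intro n
    have h1 : (Real.exp Cd * Real.exp (S.birk S.geom n x) * L) ^ α =
        P * Real.exp (α * S.birk S.geom n x) := by
      rw [show Real.exp Cd * Real.exp (S.birk S.geom n x) * L =
        (Real.exp Cd * L) * Real.exp (S.birk S.geom n x) by ring]
      rw [Real.mul_rpow (by positivity) (Real.exp_pos _).le, hP, ← Real.exp_mul,
        mul_comm (S.birk S.geom n x) α]
    rw [h1]
    have h2 : c⁻¹ * Real.exp (S.birk ψ n x) / 2 / (P * Real.exp (α * S.birk S.geom n x)) =
        K₀ * Real.exp (S.birk ψ n x - α * S.birk S.geom n x) := by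
      rw [Real.exp_sub, hK₀]
      field_simp
    rw [h2]
    refine mul_le_mul_of_nonneg_left (Real.exp_le_exp.2 ?_) hK₀0.le
    exact S.birk_lower α δ ψ hδ n x
  -- conclude
  choose η hη1 hη2 hη3 using key
  have hηtend : Tendsto η atTop (nhdsWithin ξ {ξ}ᶜ) := by
    rw [tendsto_nhdsWithin_iff]
    constructor
    · rw [tendsto_iff_dist_tendsto_zero]
      have hlim : Tendsto (fun n : ℕ => S.r ^ n * L) atTop (nhds 0) := by
        have := tendsto_pow_atTop_nhds_zero_of_lt_one S.r_pos.le S.r_lt_one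
        simpa using this.mul_const L
      refine squeeze_zero (fun n => dist_nonneg) (fun n => ?_) hlim
      rw [dist_comm, Real.dist_eq]
      exact hη2 n
    · exact Filter.Eventually.of_forall fun n => hη1 n
  rw [Filter.limsup_eq]
  refine top_unique (le_sInf fun b hb => ?_)
  by_contra hbt
  have hblt : b < ⊤ := lt_top_iff_ne_top.2 fun h => hbt (h ▸ le_refl _)
  have hev : ∀ᶠ n in atTop, ENNReal.ofReal (hquot (distFun ν) α ξ (η n)) ≤ b :=
    hηtend.eventually hb
  have harith : Tendsto (fun n : ℕ => K₀ * Real.exp ((n : ℝ) * δ)) atTop atTop := by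
    have h1 : Tendsto (fun n : ℕ => Real.exp δ ^ n) atTop atTop :=
      tendsto_pow_atTop_atTop_of_one_lt (Real.one_lt_exp_iff.2 hδ0)
    have heq : (fun n : ℕ => K₀ * Real.exp ((n : ℝ) * δ)) =
        fun n : ℕ => K₀ * Real.exp δ ^ n := by
      funext n
      rw [← Real.exp_nat_mul]
    rw [heq]
    exact h1.const_mul_atTop hK₀0
  have hgrow : ∀ᶠ n : ℕ in atTop, b.toReal < K₀ * Real.exp ((n : ℝ) * δ) :=
    harith.eventually_gt_atTop b.toReal
  obtain ⟨n, hn1, hn2⟩ := (hev.and hgrow).exists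
  have hchain : ENNReal.ofReal (K₀ * Real.exp ((n : ℝ) * δ)) ≤ b :=
    le_trans (ENNReal.ofReal_le_ofReal (le_trans (keyQ n) (hη3 n))) hn1
  have := (ENNReal.ofReal_le_iff_le_toReal hblt.ne).1 hchain
  linarith
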